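/- For every order automorphism φ of (E, E₊) there exist integers a, b, c, d with ad − bc = ±1 and a positive real number λ that is a unit of the ring R = ℤ[1/5] + ℤ[1/5]√3 (i.e., λ ∈ R and λ⁻¹ ∈ R) such that φ(r, x, y) = (λr, ax + by, cx + dy) for all (r, x, y) ∈ E. -/

import Mathlib

/-- The additive subgroup `E` of `ℝ × ℤ × ℤ`: all triples `(r, x, y)` such that
`r = (j + k√3)/5^(6i)`, `x ≡ j (mod 9)` and `y ≡ k (mod 3)` for some integers `i, j, k`. -/
def Eset : Set (ℝ × ℤ × ℤ) :=
  {p | ∃ i j k : ℤ, p.1 = ((j : ℝ) + (k : ℝ) * Real.sqrt 3) / (5 : ℝ) ^ (6 * i) ∧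
    p.2.1 ≡ j [ZMOD 9] ∧ p.2.2 ≡ k [ZMOD 3]}

/-- The positive cone `E₊ = {(r, x, y) ∈ E : r > 0} ∪ {(0, 0, 0)}`. -/
def Epos : Set (ℝ × ℤ × ℤ) :=
  {p | p ∈ Eset ∧ 0 < p.1} ∪ {0}

/-- An order automorphism of `(E, E₊)`: an additive group automorphism of `E`
(a bijection of `E` onto itself which is additive on `E`) with `φ(E₊) = E₊`. -/
structure IsOrderAuto (φ : ℝ × ℤ × ℤ → ℝ × ℤ × ℤ) : Prop where
  bijOn : Set.BijOn φ Eset Eset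
  addOn : ∀ p ∈ Eset, ∀ q ∈ Eset, φ (p + q) = φ p + φ q
  posEq : φ '' Epos = Epos

/-- `ℤ[1/5]`, as a subset of `ℝ`: rationals of the form `m / 5^i` with `m, i ∈ ℤ`. -/
def ZOneFifth : Set ℝ :=
  {r : ℝ | ∃ m i : ℤ, r = (m : ℝ) / (5 : ℝ) ^ i}

/-- The subring `R = ℤ[1/5] + ℤ[1/5]√3` of `ℝ`. -/
def Rring : Set ℝ :=
  {r : ℝ | ∃ a b : ℝ, a ∈ ZOneFifth ∧ b ∈ ZOneFifth ∧ r = a + b * Real.sqrt 3}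


lemma five_zpow_ne (i : ℤ) : ((5:ℝ) ^ i) ≠ 0 := zpow_ne_zero _ (by norm_num)

lemma rep_up {r : ℝ} {i j k : ℤ}
    (h : r = ((j : ℝ) + (k : ℝ) * Real.sqrt 3) / (5 : ℝ) ^ (6 * i)) :
    r = (((5^6*j : ℤ) : ℝ) + ((5^6*k : ℤ) : ℝ) * Real.sqrt 3) / (5 : ℝ) ^ (6 * (i+1)) := by
  rw [h, show 6*(i+1) = 6*i + 6 by ring, zpow_add₀ (by norm_num : (5:ℝ) ≠ 0)]
  push_cast
  rw [div_eq_div_iff (five_zpow_ne _) (by positivity)]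
  ring

lemma cong_up9 {x j : ℤ} (h : x ≡ j [ZMOD 9]) : x ≡ 5^6*j [ZMOD 9] :=
  h.trans (by simpa using (Int.ModEq.mul_right j (by decide : (1:ℤ) ≡ 5^6 [ZMOD 9])))

lemma cong_up3 {x j : ℤ} (h : x ≡ j [ZMOD 3]) : x ≡ 5^6*j [ZMOD 3] :=
  h.trans (by simpa using (Int.ModEq.mul_right j (by decide : (1:ℤ) ≡ 5^6 [ZMOD 3])))

lemma rep_lift {p : ℝ × ℤ × ℤ} {i j k : ℤ}
    (h : p.1 = ((j : ℝ) + (k : ℝ) * Real.sqrt 3) / (5 : ℝ) ^ (6 * i))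
    (hx : p.2.1 ≡ j [ZMOD 9]) (hy : p.2.2 ≡ k [ZMOD 3]) (N : ℤ) (hN : i ≤ N) :
    ∃ j' k' : ℤ, p.1 = ((j' : ℝ) + (k' : ℝ) * Real.sqrt 3) / (5 : ℝ) ^ (6 * N) ∧
      p.2.1 ≡ j' [ZMOD 9] ∧ p.2.2 ≡ k' [ZMOD 3] := by
  obtain ⟨n, rfl⟩ : ∃ n : ℕ, N = i + n := ⟨(N - i).toNat, by omega⟩
  clear hN
  induction n with
  | zero => exact ⟨j, k, by simpa using h, hx, hy⟩
  | succ n ih =>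
    obtain ⟨j', k', h', hx', hy'⟩ := ih
    refine ⟨5^6*j', 5^6*k', ?_, cong_up9 hx', cong_up3 hy'⟩
    have := rep_up h'
    convert this using 3
    push_cast; ring

lemma Eset_zero : (0 : ℝ × ℤ × ℤ) ∈ Eset :=
  ⟨0, 0, 0, by norm_num, Int.ModEq.refl _, Int.ModEq.refl _⟩

lemma Eset_add {p q : ℝ × ℤ × ℤ} (hp : p ∈ Eset) (hq : q ∈ Eset) : p + q ∈ Eset := by
  obtain ⟨i, j, k, h1, h2, h3⟩ := hp
  obtain ⟨i', j', k', h1', h2', h3'⟩ := hq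
  obtain ⟨j₁, k₁, g1, g2, g3⟩ := rep_lift h1 h2 h3 (max i i') (le_max_left _ _)
  obtain ⟨j₂, k₂, g1', g2', g3'⟩ := rep_lift h1' h2' h3' (max i i') (le_max_right _ _)
  refine ⟨max i i', j₁ + j₂, k₁ + k₂, ?_, g2.add g2', g3.add g3'⟩
  show p.1 + q.1 = _
  rw [g1, g1']; push_cast; rw [← add_div]; ring_nf

lemma Eset_neg {p : ℝ × ℤ × ℤ} (hp : p ∈ Eset) : -p ∈ Eset := by
  obtain ⟨i, j, k, h1, h2, h3⟩ := hp
  refine ⟨i, -j, -k, ?_, h2.neg, h3.neg⟩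
  show -p.1 = _
  rw [h1]; push_cast; ring

def Egrp : AddSubgroup (ℝ × ℤ × ℤ) where
  carrier := Eset
  zero_mem' := Eset_zero
  add_mem' := Eset_add
  neg_mem' := Eset_neg

lemma Eset_zsmul {p : ℝ × ℤ × ℤ} (hp : p ∈ Eset) (n : ℤ) : n • p ∈ Eset :=
  Egrp.zsmul_mem hp n

lemma Eset_sub {p q : ℝ × ℤ × ℤ} (hp : p ∈ Eset) (hq : q ∈ Eset) : p - q ∈ Eset :=
  Egrp.sub_mem hp hq

lemma Eset_nsmul {p : ℝ × ℤ × ℤ} (hp : p ∈ Eset) (n : ℕ) : n • p ∈ Eset :=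
  Egrp.nsmul_mem hp n


section
variable {φ : ℝ × ℤ × ℤ → ℝ × ℤ × ℤ} (hφ : IsOrderAuto φ)
include hφ

lemma phi_zero : φ 0 = 0 := by
  have h := hφ.addOn 0 Eset_zero 0 Eset_zero
  simp only [add_zero] at h
  have := congrArg (fun q => q - φ 0) h
  simpa using this.symm

lemma phi_neg {p : ℝ × ℤ × ℤ} (hp : p ∈ Eset) : φ (-p) = -φ p := by
  have := hφ.addOn p hp (-p) (Eset_neg hp)
  rw [add_neg_cancel, phi_zero hφ] at this
  exact eq_neg_of_add_eq_zero_right this.symm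

lemma phi_nsmul {p : ℝ × ℤ × ℤ} (hp : p ∈ Eset) (n : ℕ) : φ (n • p) = n • φ p := by
  induction n with
  | zero => simpa using phi_zero hφ
  | succ n ih =>
    rw [succ_nsmul, hφ.addOn _ (Eset_nsmul hp n) p hp, ih, succ_nsmul]

lemma phi_zsmul {p : ℝ × ℤ × ℤ} (hp : p ∈ Eset) (n : ℤ) : φ (n • p) = n • φ p := by
  cases n with
  | ofNat n => simpa using phi_nsmul hφ hp n
  | negSucc n =>
    rw [Int.negSucc_eq, neg_smul, phi_neg hφ (Eset_zsmul hp _), neg_smul]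
    congr 1
    · simpa using phi_nsmul hφ hp (n+1)

lemma phi_comb {p q : ℝ × ℤ × ℤ} (hp : p ∈ Eset) (hq : q ∈ Eset) (m n : ℤ) :
    φ (m • p + n • q) = m • φ p + n • φ q := by
  rw [hφ.addOn _ (Eset_zsmul hp m) _ (Eset_zsmul hq n), phi_zsmul hφ hp, phi_zsmul hφ hq]

lemma phi_mem {p : ℝ × ℤ × ℤ} (hp : p ∈ Eset) : φ p ∈ Eset := hφ.bijOn.mapsTo hp

lemma phi_inj {p q : ℝ × ℤ × ℤ} (hp : p ∈ Eset) (hq : q ∈ Eset) (h : φ p = φ q) : p = q :=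
  hφ.bijOn.injOn hp hq h

lemma phi_pos {p : ℝ × ℤ × ℤ} (hp : p ∈ Eset) (h : 0 < p.1) : 0 < (φ p).1 := by
  have h1 : φ p ∈ Epos := by
    rw [← hφ.posEq]; exact ⟨p, Or.inl ⟨hp, h⟩, rfl⟩
  rcases h1 with h1 | h1
  · exact h1.2
  · exfalso
    have : p = 0 := phi_inj hφ hp Eset_zero (by rw [phi_zero hφ]; exact h1)
    rw [this] at h; simp at h

lemma phi_surj {q : ℝ × ℤ × ℤ} (hq : q ∈ Eset) : ∃ p ∈ Eset, φ p = q :=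
  hφ.bijOn.surjOn hq

lemma key_lt {p q : ℝ × ℤ × ℤ} (hp : p ∈ Eset) (hq : q ∈ Eset) (m n : ℤ)
    (h : (m:ℝ) * q.1 < (n:ℝ) * p.1) : (m:ℝ) * (φ q).1 < (n:ℝ) * (φ p).1 := by
  set w := n • p + (-m) • q with hw
  have hwE : w ∈ Eset := Eset_add (Eset_zsmul hp n) (Eset_zsmul hq (-m))
  have hw1 : w.1 = (n:ℝ) * p.1 - (m:ℝ) * q.1 := by
    simp [hw, Prod.fst_add, Prod.smul_fst, zsmul_eq_mul]; push_cast; ring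
  have hwpos : 0 < w.1 := by rw [hw1]; linarith
  have := phi_pos hφ hwE hwpos
  rw [phi_comb hφ hp hq n (-m)] at this
  have h2 : (n • φ p + (-m) • φ q).1 = (n:ℝ) * (φ p).1 - (m:ℝ) * (φ q).1 := by
    simp [Prod.fst_add, Prod.smul_fst, zsmul_eq_mul]; push_cast; ring
  rw [h2] at this
  linarith

noncomputable def ee1 : ℝ × ℤ × ℤ := ((1:ℝ), 1, 0)
noncomputable def ee2 : ℝ × ℤ × ℤ := (Real.sqrt 3, 0, 1)

omit hφ in
lemma ee1_mem : ee1 ∈ Eset := ⟨0, 1, 0, by norm_num [ee1], Int.ModEq.refl _, Int.ModEq.refl _⟩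
omit hφ in
lemma ee2_mem : ee2 ∈ Eset := ⟨0, 0, 1, by norm_num [ee2], Int.ModEq.refl _, Int.ModEq.refl _⟩

lemma phi_first {p : ℝ × ℤ × ℤ} (hp : p ∈ Eset) : (φ p).1 = (φ ee1).1 * p.1 := by
  set L := (φ ee1).1 with hL
  have hLpos : 0 < L := phi_pos hφ ee1_mem (by norm_num [ee1])
  by_contra hne
  rcases lt_or_gt_of_ne hne with hlt | hgt
  · -- (φ p).1 < L * p.1, i.e. (φ p).1 / L < p.1
    have h0 : (φ p).1 / L < p.1 := by rw [div_lt_iff₀ hLpos]; linarith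
    obtain ⟨ρ, h1, h2⟩ := exists_rat_btwn h0
    have hden : (0:ℝ) < (ρ.den : ℝ) := by exact_mod_cast ρ.pos
    have hcast : (ρ:ℝ) = (ρ.num : ℝ) / (ρ.den : ℝ) := by
      rw [Rat.cast_def]
    have hmn : ((ρ.num:ℤ):ℝ) * ee1.1 < ((ρ.den:ℤ):ℝ) * p.1 := by
      have : (ρ.num : ℝ) < (ρ.den : ℝ) * p.1 := by
        rw [hcast] at h2; rw [← div_lt_iff₀' hden]; exact h2
      simpa [ee1] using this
    have hkey := key_lt hφ hp ee1_mem ρ.num ρ.den hmn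
    have h3 : (φ p).1 * (ρ.den : ℝ) < (ρ.num : ℝ) * L := by
      rw [hcast] at h1
      rw [div_lt_div_iff₀ hLpos hden] at h1
      linarith
    push_cast at hkey
    linarith
  · have h0 : p.1 < (φ p).1 / L := by rw [lt_div_iff₀ hLpos]; linarith
    obtain ⟨ρ, h1, h2⟩ := exists_rat_btwn h0
    have hden : (0:ℝ) < (ρ.den : ℝ) := by exact_mod_cast ρ.pos
    have hcast : (ρ:ℝ) = (ρ.num : ℝ) / (ρ.den : ℝ) := by
      rw [Rat.cast_def]
    have hmn : ((ρ.den:ℤ):ℝ) * p.1 < ((ρ.num:ℤ):ℝ) * ee1.1 := by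
      have : (ρ.den : ℝ) * p.1 < (ρ.num : ℝ) := by
        rw [hcast] at h1; rw [← lt_div_iff₀' hden]; exact h1
      simpa [ee1] using this
    have hkey := key_lt hφ ee1_mem hp ρ.den ρ.num hmn
    have h3 : (ρ.num : ℝ) * L < (φ p).1 * (ρ.den : ℝ) := by
      rw [hcast] at h2
      rw [div_lt_div_iff₀ hden hLpos] at h2
      linarith
    push_cast at hkey
    linarith

omit hφ in
lemma int_zero_of_dvd {t : ℤ} (h : ∀ n : ℕ, (5:ℤ)^(6*n) ∣ t) : t = 0 := by
  by_contra ht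
  set N := t.natAbs with hN
  have h1 : (5:ℤ)^(6*N) ∣ |t| := (dvd_abs _ _).mpr (h N)
  have h2 : (5:ℤ)^(6*N) ≤ |t| := Int.le_of_dvd (abs_pos.mpr ht) h1
  have h3 : |t| = (N:ℤ) := Int.abs_eq_natAbs t
  have h4 : (N:ℤ) < 5^N := by exact_mod_cast Nat.lt_pow_self (n := N) (by norm_num)
  have h5 : (5:ℤ)^N ≤ 5^(6*N) := pow_le_pow_right₀ (by norm_num) (by omega)
  omega

lemma phi_snd_zero {p : ℝ × ℤ × ℤ} (hp : p ∈ Eset) (h1 : p.2.1 = 0) (h2 : p.2.2 = 0) :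
    (φ p).2.1 = 0 ∧ (φ p).2.2 = 0 := by
  have key : ∀ n : ℕ, (5:ℤ)^(6*n) ∣ (φ p).2.1 ∧ (5:ℤ)^(6*n) ∣ (φ p).2.2 := by
    intro n
    obtain ⟨i, j, k, g1, g2, g3⟩ := hp
    set pn : ℝ × ℤ × ℤ := (p.1 / (5:ℝ)^(6*n), (0:ℤ), (0:ℤ)) with hpn
    have hpnE : pn ∈ Eset := by
      refine ⟨i + n, j, k, ?_, by rw [h1] at g2; exact g2, by rw [h2] at g3; exact g3⟩
      show p.1 / (5:ℝ)^(6*n) = _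
      rw [g1, div_div, show 6*(i+(n:ℤ)) = 6*i + 6*(n:ℤ) by ring,
        zpow_add₀ (by norm_num : (5:ℝ) ≠ 0)]
      norm_cast
    have heq : ((5:ℤ)^(6*n)) • pn = p := by
      have : p = (p.1, p.2.1, p.2.2) := rfl
      rw [this]
      refine Prod.ext ?_ (Prod.ext ?_ ?_)
      · show ((5:ℤ)^(6*n) : ℤ) • (p.1 / (5:ℝ)^(6*n)) = p.1
        rw [zsmul_eq_mul]
        push_cast
        field_simp
      · show (5:ℤ)^(6*n) • (0:ℤ) = p.2.1
        simp [h1]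
      · show (5:ℤ)^(6*n) • (0:ℤ) = p.2.2
        simp [h2]
    have := phi_zsmul hφ hpnE ((5:ℤ)^(6*n))
    rw [heq] at this
    constructor
    · exact ⟨(φ pn).2.1, by rw [this]; simp [zsmul_eq_mul]⟩
    · exact ⟨(φ pn).2.2, by rw [this]; simp [zsmul_eq_mul]⟩
  exact ⟨int_zero_of_dvd (fun n => (key n).1), int_zero_of_dvd (fun n => (key n).2)⟩

lemma phi_snd {p : ℝ × ℤ × ℤ} (hp : p ∈ Eset) :
    (φ p).2.1 = (φ ee1).2.1 * p.2.1 + (φ ee2).2.1 * p.2.2 ∧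
    (φ p).2.2 = (φ ee1).2.2 * p.2.1 + (φ ee2).2.2 * p.2.2 := by
  set q : ℝ × ℤ × ℤ := p.2.1 • ee1 + p.2.2 • ee2 with hq
  have hqE : q ∈ Eset := Eset_add (Eset_zsmul ee1_mem _) (Eset_zsmul ee2_mem _)
  have hq21 : q.2.1 = p.2.1 := by simp [hq, ee1, ee2]
  have hq22 : q.2.2 = p.2.2 := by simp [hq, ee1, ee2]
  have hwE : p - q ∈ Eset := Eset_sub hp hqE
  have hw21 : (p - q).2.1 = 0 := by simp [Prod.snd_sub, hq21]
  have hw22 : (p - q).2.2 = 0 := by simp [Prod.snd_sub, hq22]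
  obtain ⟨z1, z2⟩ := phi_snd_zero hφ hwE hw21 hw22
  have hsplit : φ p = φ q + φ (p - q) := by
    conv_lhs => rw [show p = q + (p - q) by abel]
    exact hφ.addOn q hqE _ hwE
  have hphiq : φ q = p.2.1 • φ ee1 + p.2.2 • φ ee2 := phi_comb hφ ee1_mem ee2_mem _ _
  constructor
  · have := congrArg (fun v => v.2.1) hsplit
    simp only [Prod.snd_add, Prod.fst_add] at this
    rw [this, z1, hphiq]
    simp [Prod.snd_add, smul_eq_mul]
    ring
  · have := congrArg (fun v => v.2.2) hsplit
    simp only [Prod.snd_add] at this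
    rw [this, z2, hphiq]
    simp [Prod.snd_add, smul_eq_mul]
    ring

end

lemma fst_mem_Rring {p : ℝ × ℤ × ℤ} (hp : p ∈ Eset) : p.1 ∈ Rring := by
  obtain ⟨i, j, k, h1, -, -⟩ := hp
  refine ⟨(j:ℝ) / (5:ℝ)^(6*i), (k:ℝ) / (5:ℝ)^(6*i), ⟨j, 6*i, rfl⟩, ⟨k, 6*i, rfl⟩, ?_⟩
  rw [h1]
  field_simp

/-- For every order automorphism `φ` of `(E, E₊)` there exist integers `a, b, c, d` with
`ad − bc = ±1` and a positive real `λ` which is a unit of `R = ℤ[1/5] + ℤ[1/5]√3`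
(i.e. `λ ∈ R` and `λ⁻¹ ∈ R`) such that `φ(r, x, y) = (λr, ax + by, cx + dy)` on `E`. -/
theorem stmt_11 (φ : ℝ × ℤ × ℤ → ℝ × ℤ × ℤ) (hφ : IsOrderAuto φ) :
    ∃ (a b c d : ℤ) (l : ℝ),
      (a * d - b * c = 1 ∨ a * d - b * c = -1) ∧
      0 < l ∧ l ∈ Rring ∧ l⁻¹ ∈ Rring ∧
      ∀ p ∈ Eset, φ p = (l * p.1, a * p.2.1 + b * p.2.2, c * p.2.1 + d * p.2.2) := by
  obtain ⟨a, b, c, d, L, hdet, hL, hR, hRi, hmain⟩ :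
      ∃ (a b c d : ℤ) (l : ℝ),
        (a * d - b * c = 1 ∨ a * d - b * c = -1) ∧
        0 < l ∧ l ∈ Rring ∧ l⁻¹ ∈ Rring ∧
        ∀ p ∈ Eset, φ p = (l * p.1, a * p.2.1 + b * p.2.2, c * p.2.1 + d * p.2.2) := by
    refine ⟨(φ ee1).2.1, (φ ee2).2.1, (φ ee1).2.2, (φ ee2).2.2, (φ ee1).1, ?_, ?_, ?_, ?_, ?_⟩
    · -- determinant
      obtain ⟨w1, hw1E, hw1⟩ := phi_surj hφ ee1_mem
      obtain ⟨w2, hw2E, hw2⟩ := phi_surj hφ ee2_mem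
      have e11 : (φ ee1).2.1 * w1.2.1 + (φ ee2).2.1 * w1.2.2 = 1 := by
        have := (phi_snd hφ hw1E).1; rw [hw1] at this
        simpa [ee1] using this.symm
      have e12 : (φ ee1).2.2 * w1.2.1 + (φ ee2).2.2 * w1.2.2 = 0 := by
        have := (phi_snd hφ hw1E).2; rw [hw1] at this
        simpa [ee1] using this.symm
      have e21 : (φ ee1).2.1 * w2.2.1 + (φ ee2).2.1 * w2.2.2 = 0 := by
        have := (phi_snd hφ hw2E).1; rw [hw2] at this
        simpa [ee2] using this.symm
      have e22 : (φ ee1).2.2 * w2.2.1 + (φ ee2).2.2 * w2.2.2 = 1 := by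
        have := (phi_snd hφ hw2E).2; rw [hw2] at this
        simpa [ee2] using this.symm
      have hdet : ((φ ee1).2.1 * (φ ee2).2.2 - (φ ee2).2.1 * (φ ee1).2.2) *
          (w1.2.1 * w2.2.2 - w2.2.1 * w1.2.2) = 1 := by
        have hx : ((φ ee1).2.1 * (φ ee2).2.2 - (φ ee2).2.1 * (φ ee1).2.2) *
            (w1.2.1 * w2.2.2 - w2.2.1 * w1.2.2)
            = ((φ ee1).2.1 * w1.2.1 + (φ ee2).2.1 * w1.2.2) *
                ((φ ee1).2.2 * w2.2.1 + (φ ee2).2.2 * w2.2.2)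
              - ((φ ee1).2.1 * w2.2.1 + (φ ee2).2.1 * w2.2.2) *
                ((φ ee1).2.2 * w1.2.1 + (φ ee2).2.2 * w1.2.2) := by ring
        rw [hx, e11, e12, e21, e22]
        ring
      exact Int.isUnit_iff.mp (IsUnit.of_mul_eq_one _ hdet)
    · exact phi_pos hφ ee1_mem (by norm_num [ee1])
    · exact fst_mem_Rring (phi_mem hφ ee1_mem)
    · -- inverse in Rring
      obtain ⟨w, hwE, hw⟩ := phi_surj hφ ee1_mem
      have h1 : (φ ee1).1 * w.1 = 1 := by
        have := phi_first hφ hwE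
        rw [hw] at this
        have h2 : ee1.1 = (1:ℝ) := rfl
        rw [h2] at this
        exact this.symm
      rw [inv_eq_of_mul_eq_one_right h1]
      exact fst_mem_Rring hwE
    · intro p hp
      have h1 := phi_first hφ hp
      have h2 := phi_snd hφ hp
      exact Prod.ext h1 (Prod.ext h2.1 h2.2)
  exact ⟨a, b, c, d, L, hdet, hL, hR, hRi, hmain⟩
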